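/- Let u ∈ ℝ^d and let X be a random vector with density proportional to exp(−⟨u, x⟩) with respect to Lebesgue measure on K. Then E⟨u, X⟩ − min_{x∈K} ⟨u, x⟩ ≤ d. Equivalently, for a unit vector ℓ and temperature T > 0, if X has density proportional to exp(−⟨ℓ, x⟩/T) on K, then E⟨ℓ, X⟩ − min_{x∈K} ⟨ℓ, x⟩ ≤ d·T. -/

import Mathlib

open MeasureTheory Set
open scoped RealInnerProductSpace Pointwise

private lemma annealing_core {d : ℕ} (K : Set (EuclideanSpace ℝ (Fin d)))
    (hKcomp : IsCompact K) (hKconv : Convex ℝ K)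
    (h : EuclideanSpace ℝ (Fin d) → ℝ) (hhcont : Continuous h)
    (hhnn : ∀ x ∈ K, 0 ≤ h x) (x0 : EuclideanSpace ℝ (Fin d)) (hx0K : x0 ∈ K)
    (haff : ∀ (l : ℝ) (y : EuclideanSpace ℝ (Fin d)), h (x0 + l • (y - x0)) = l * h y) :
    (∫ x in K, h x * Real.exp (-h x)) ≤ d * ∫ x in K, Real.exp (-h x) := by
  have hKm := hKcomp.measurableSet
  have hKfin : volume K ≠ ⊤ := hKcomp.measure_lt_top.ne
  -- integrability of anything continuous on K
  have hint : ∀ f : EuclideanSpace ℝ (Fin d) → ℝ, Continuous f → IntegrableOn f K := by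
    intro f hf
    exact hf.continuousOn.integrableOn_compact hKcomp
  set H1 : ℝ := ∫ x in K, Real.exp (-h x) with hH1
  set A : ℝ := ∫ x in K, h x * Real.exp (-h x) with hA
  have hAnn : 0 ≤ A := by
    apply setIntegral_nonneg hKm
    intro x hx
    exact mul_nonneg (hhnn x hx) (Real.exp_pos _).le
  -- key scaling inequality
  have key : ∀ l : ℝ, l ∈ Ioo (0:ℝ) 1 →
      l ^ d * (∫ x in K, Real.exp (-(l * h x))) ≤ H1 := by
    intro l hl
    set φ : EuclideanSpace ℝ (Fin d) → EuclideanSpace ℝ (Fin d) :=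
      fun y => x0 + l • (y - x0) with hφ
    have hsub : φ '' K ⊆ K := by
      rintro _ ⟨y, hy, rfl⟩
      have : x0 + l • (y - x0) = (1 - l) • x0 + l • y := by
        module
      rw [hφ]; simp only []; rw [this]
      exact hKconv hx0K hy (by linarith [hl.2]) hl.1.le (by ring)
    have hder : ∀ y ∈ K, HasFDerivWithinAt φ
        (l • ContinuousLinearMap.id ℝ (EuclideanSpace ℝ (Fin d))) K y := by
      intro y hy
      have : HasFDerivAt φ (l • ContinuousLinearMap.id ℝ (EuclideanSpace ℝ (Fin d))) y := by
        exact (((hasFDerivAt_id (𝕜 := ℝ) y).sub_const x0).const_smul l).const_add x0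
      exact this.hasFDerivWithinAt
    have hinj : InjOn φ K := by
      intro a _ b _ hab
      have : l • (a - x0) = l • (b - x0) := by
        simpa [hφ] using hab
      have := smul_right_injective (EuclideanSpace ℝ (Fin d)) hl.1.ne' this
      simpa [sub_left_inj] using this
    have hdet : ((l • ContinuousLinearMap.id ℝ (EuclideanSpace ℝ (Fin d))).det) = l ^ d := by
      rw [ContinuousLinearMap.det, ContinuousLinearMap.coe_smul, ContinuousLinearMap.coe_id,
        LinearMap.det_smul, LinearMap.det_id, mul_one, finrank_euclideanSpace_fin]
    have hchg := integral_image_eq_integral_abs_det_fderiv_smul volume hKm hder hinj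
        (fun x => Real.exp (-h x))
    have heq : ∫ x in φ '' K, Real.exp (-h x) = l ^ d * ∫ x in K, Real.exp (-(l * h x)) := by
      rw [hchg]
      simp only [hdet, abs_of_pos (pow_pos hl.1 d), smul_eq_mul, hφ, haff]
      rw [MeasureTheory.integral_const_mul]
    have hmono : ∫ x in φ '' K, Real.exp (-h x) ≤ H1 := by
      apply setIntegral_mono_set (hint _ (Real.continuous_exp.comp hhcont.neg))
      · filter_upwards with x using (Real.exp_pos _).le
      · exact HasSubset.Subset.eventuallyLE hsub
    linarith [heq ▸ hmono]
  -- pointwise lower bound on exp(-(l*h x))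
  have step : ∀ l : ℝ, l ∈ Ioo (0:ℝ) 1 → l ^ d * A ≤ d * H1 := by
    intro l hl
    have hpt : ∀ x ∈ K, Real.exp (-h x) + (1 - l) * (h x * Real.exp (-h x))
        ≤ Real.exp (-(l * h x)) := by
      intro x hx
      have h1 : 1 + (1 - l) * h x ≤ Real.exp ((1 - l) * h x) :=
        Real.add_one_le_exp _ |>.trans_eq' (by ring_nf)
      have h2 : Real.exp (-(l * h x)) = Real.exp (-h x) * Real.exp ((1 - l) * h x) := by
        rw [← Real.exp_add]; ring_nf
      calc Real.exp (-h x) + (1 - l) * (h x * Real.exp (-h x))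
          = Real.exp (-h x) * (1 + (1 - l) * h x) := by ring
        _ ≤ Real.exp (-h x) * Real.exp ((1 - l) * h x) := by
            exact mul_le_mul_of_nonneg_left h1 (Real.exp_pos _).le
        _ = Real.exp (-(l * h x)) := h2.symm
    have hintexp : IntegrableOn (fun x => Real.exp (-h x)) K volume :=
      hint _ (Real.continuous_exp.comp hhcont.neg)
    have hintA : IntegrableOn (fun x => h x * Real.exp (-h x)) K volume :=
      hint _ (hhcont.mul (Real.continuous_exp.comp hhcont.neg))
    have hintl : IntegrableOn (fun x => Real.exp (-(l * h x))) K volume :=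
      hint _ (Real.continuous_exp.comp ((continuous_const.mul hhcont).neg))
    have hmono2 : H1 + (1 - l) * A ≤ ∫ x in K, Real.exp (-(l * h x)) := calc
      H1 + (1 - l) * A
          = ∫ x in K, (Real.exp (-h x) + (1 - l) * (h x * Real.exp (-h x))) := by
            rw [integral_add hintexp (hintA.const_mul (1 - l)),
              MeasureTheory.integral_const_mul]
      _ ≤ _ := setIntegral_mono_on (hintexp.add (hintA.const_mul (1 - l))) hintl hKm hpt
    have hkey := key l hl
    have hbern : 1 - l ^ d ≤ d * (1 - l) := by
      have := one_add_mul_le_pow (a := l - 1) (by nlinarith [hl.1]) d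
      simp only [add_sub_cancel] at this
      linarith
    have hH1nn : 0 ≤ H1 := setIntegral_nonneg hKm fun x _ => (Real.exp_pos _).le
    have h3 : l ^ d * (H1 + (1 - l) * A) ≤ H1 :=
      le_trans (mul_le_mul_of_nonneg_left hmono2 (pow_pos hl.1 d).le) hkey
    have h4 : l ^ d * (1 - l) * A ≤ (1 - l ^ d) * H1 := by nlinarith
    have h5 : l ^ d * (1 - l) * A ≤ d * (1 - l) * H1 := by nlinarith
    have hl1 : (0:ℝ) < 1 - l := by linarith [hl.2]
    nlinarith
  -- take the limit l → 1⁻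
  have hten : Filter.Tendsto (fun l : ℝ => l ^ d * A) (nhdsWithin 1 (Iio 1)) (nhds A) := by
    have : Filter.Tendsto (fun l : ℝ => l ^ d * A) (nhds 1) (nhds (1 ^ d * A)) :=
      ((continuous_pow d).mul continuous_const).tendsto 1
    simpa using this.mono_left nhdsWithin_le_nhds
  have : A ≤ d * H1 := by
    refine le_of_tendsto hten ?_
    filter_upwards [Ioo_mem_nhdsLT (show (0:ℝ) < 1 by norm_num)] with l hl
    exact step l hl
  exact this

private lemma annealing_main {d : ℕ} (K : Set (EuclideanSpace ℝ (Fin d)))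
    (hKcomp : IsCompact K) (hKconv : Convex ℝ K) (hKpos : 0 < volume K)
    (u : EuclideanSpace ℝ (Fin d)) :
    (∫ x in K, ⟪u, x⟫ * Real.exp (-⟪u, x⟫)) / (∫ x in K, Real.exp (-⟪u, x⟫)) -
        sInf ((fun x => ⟪u, x⟫) '' K) ≤ (d : ℝ) := by
  have hKm := hKcomp.measurableSet
  have hKfin : volume K ≠ ⊤ := hKcomp.measure_lt_top.ne
  have hKne : K.Nonempty := by
    rcases eq_empty_or_nonempty K with h | h
    · simp [h] at hKpos
    · exact h
  have hcont : Continuous fun x : EuclideanSpace ℝ (Fin d) => ⟪u, x⟫ :=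
    continuous_const.inner continuous_id
  obtain ⟨x0, hx0K, hx0min⟩ := hKcomp.exists_isMinOn hKne hcont.continuousOn
  set m : ℝ := ⟪u, x0⟫ with hm
  have hx0min' : ∀ x ∈ K, m ≤ ⟪u, x⟫ := fun x hx => hx0min hx
  have hsInf : sInf ((fun x => ⟪u, x⟫) '' K) = m :=
    IsLeast.csInf_eq ⟨⟨x0, hx0K, rfl⟩, by rintro y ⟨x, hx, rfl⟩; exact hx0min' x hx⟩
  set h : EuclideanSpace ℝ (Fin d) → ℝ := fun x => ⟪u, x⟫ - m with hh
  have hhcont : Continuous h := hcont.sub continuous_const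
  have hhnn : ∀ x ∈ K, 0 ≤ h x := fun x hx => sub_nonneg.2 (hx0min' x hx)
  have haff : ∀ (l : ℝ) (y : EuclideanSpace ℝ (Fin d)), h (x0 + l • (y - x0)) = l * h y := by
    intro l y
    simp only [hh, inner_add_right, real_inner_smul_right, inner_sub_right, hm]
    ring
  have hint : ∀ f : EuclideanSpace ℝ (Fin d) → ℝ, Continuous f → IntegrableOn f K :=
    fun f hf => hf.continuousOn.integrableOn_compact hKcomp
  set H1 : ℝ := ∫ x in K, Real.exp (-h x) with hH1
  set A : ℝ := ∫ x in K, h x * Real.exp (-h x) with hA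
  have core := annealing_core K hKcomp hKconv h hhcont hhnn x0 hx0K haff
  -- positivity of H1
  obtain ⟨z, hzK, hzmax⟩ := hKcomp.exists_isMaxOn hKne hhcont.continuousOn
  have hH1pos : 0 < H1 := by
    have hlb : ∀ x ∈ K, Real.exp (-h z) ≤ Real.exp (-h x) :=
      fun x hx => Real.exp_le_exp.2 (neg_le_neg (hzmax hx))
    have := setIntegral_ge_of_const_le_real hKm hKfin hlb
      (hint _ (Real.continuous_exp.comp hhcont.neg))
    have hvol : 0 < (volume K).toReal := ENNReal.toReal_pos hKpos.ne' hKfin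
    calc (0:ℝ) < Real.exp (-h z) * (volume K).toReal := by positivity
      _ ≤ H1 := this
  -- rewrite the integrals
  have hintexp : IntegrableOn (fun x => Real.exp (-h x)) K volume :=
    hint _ (Real.continuous_exp.comp hhcont.neg)
  have hintA : IntegrableOn (fun x => h x * Real.exp (-h x)) K volume :=
    hint _ (hhcont.mul (Real.continuous_exp.comp hhcont.neg))
  have Ebot : (∫ x in K, Real.exp (-⟪u, x⟫)) = Real.exp (-m) * H1 := by
    rw [hH1, ← MeasureTheory.integral_const_mul]
    apply setIntegral_congr_fun hKm
    intro x _
    show Real.exp (-⟪u, x⟫) = Real.exp (-m) * Real.exp (-h x)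
    rw [← Real.exp_add]
    congr 1
    simp only [hh]
    ring
  have Etop : (∫ x in K, ⟪u, x⟫ * Real.exp (-⟪u, x⟫))
      = Real.exp (-m) * A + (Real.exp (-m) * m) * H1 := by
    rw [hA, hH1, ← MeasureTheory.integral_const_mul, ← MeasureTheory.integral_const_mul,
      ← integral_add ((hintA).const_mul _) ((hintexp).const_mul _)]
    apply setIntegral_congr_fun hKm
    intro x _
    show ⟪u, x⟫ * Real.exp (-⟪u, x⟫)
        = Real.exp (-m) * (h x * Real.exp (-h x)) + Real.exp (-m) * m * Real.exp (-h x)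
    have hhe : Real.exp (-⟪u, x⟫) = Real.exp (-m) * Real.exp (-h x) := by
      rw [← Real.exp_add]; congr 1; simp only [hh]; ring
    rw [hhe]
    have : ⟪u, x⟫ = h x + m := by simp [hh]
    rw [this]; ring
  rw [Etop, Ebot, hsInf]
  have hexp : (0:ℝ) < Real.exp (-m) := Real.exp_pos _
  have heq : (Real.exp (-m) * A + Real.exp (-m) * m * H1) / (Real.exp (-m) * H1) - m
      = A / H1 := by
    field_simp
    ring
  rw [heq, div_le_iff₀ hH1pos]
  linarith [core]

/-- if `X` has density proportional to `exp(−⟨u, x⟩)` on `K`, then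
`E⟨u, X⟩ − min_{x ∈ K} ⟨u, x⟩ ≤ d`; equivalently, for a unit vector `ℓ` and temperature
`T > 0`, if `X` has density proportional to `exp(−⟨ℓ, x⟩/T)` on `K`, then
`E⟨ℓ, X⟩ − min_{x ∈ K} ⟨ℓ, x⟩ ≤ d·T`. -/
theorem annealing_expectation_bound
    {d : ℕ} (K : Set (EuclideanSpace ℝ (Fin d)))
    (hKcomp : IsCompact K) (hKconv : Convex ℝ K) (hKint : (interior K).Nonempty)
    (hKpos : 0 < volume K)
    (u : EuclideanSpace ℝ (Fin d)) :
    ((∫ x in K, ⟪u, x⟫ * Real.exp (-⟪u, x⟫)) / (∫ x in K, Real.exp (-⟪u, x⟫)) -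
        sInf ((fun x => ⟪u, x⟫) '' K) ≤ (d : ℝ)) ∧
    (∀ (l : EuclideanSpace ℝ (Fin d)) (T : ℝ), ‖l‖ = 1 → 0 < T →
      (∫ x in K, ⟪l, x⟫ * Real.exp (-⟪l, x⟫ / T)) / (∫ x in K, Real.exp (-⟪l, x⟫ / T)) -
          sInf ((fun x => ⟪l, x⟫) '' K) ≤ (d : ℝ) * T) := by
  constructor
  · exact annealing_main K hKcomp hKconv hKpos u
  · intro l T _ hT
    have hmain := annealing_main K hKcomp hKconv hKpos (T⁻¹ • l)
    have hip : ∀ x : EuclideanSpace ℝ (Fin d), ⟪T⁻¹ • l, x⟫ = T⁻¹ * ⟪l, x⟫ :=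
      fun x => real_inner_smul_left l x T⁻¹
    have hneg : ∀ x : EuclideanSpace ℝ (Fin d), -⟪T⁻¹ • l, x⟫ = -⟪l, x⟫ / T := by
      intro x; rw [hip]; field_simp
    have e1 : (∫ x in K, ⟪T⁻¹ • l, x⟫ * Real.exp (-⟪T⁻¹ • l, x⟫))
        = T⁻¹ * ∫ x in K, ⟪l, x⟫ * Real.exp (-⟪l, x⟫ / T) := by
      rw [← MeasureTheory.integral_const_mul]
      congr 1; ext x; rw [hip, neg_div, div_eq_inv_mul]; ring_nf
    have e2 : (∫ x in K, Real.exp (-⟪T⁻¹ • l, x⟫))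
        = ∫ x in K, Real.exp (-⟪l, x⟫ / T) := by
      congr 1; ext x; rw [hneg]
    have e3 : sInf ((fun x => ⟪T⁻¹ • l, x⟫) '' K)
        = T⁻¹ * sInf ((fun x => ⟪l, x⟫) '' K) := by
      have him : (fun x => ⟪T⁻¹ • l, x⟫) '' K = T⁻¹ • ((fun x => ⟪l, x⟫) '' K) := by
        rw [← Set.image_smul, Set.image_image]
        exact Set.image_congr fun x _ => by rw [smul_eq_mul]; exact hip x
      rw [him, Real.sInf_smul_of_nonneg (by positivity)]
      simp [smul_eq_mul]
    rw [e1, e2, e3, mul_div_assoc] at hmain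
    set B := (∫ x in K, ⟪l, x⟫ * Real.exp (-⟪l, x⟫ / T)) / ∫ x in K, Real.exp (-⟪l, x⟫ / T)
    set I := sInf ((fun x => ⟪l, x⟫) '' K)
    calc B - I = T * (T⁻¹ * B - T⁻¹ * I) := by field_simp
      _ ≤ T * d := mul_le_mul_of_nonneg_left hmain hT.le
      _ = (d : ℝ) * T := mul_comm _ _
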